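/- Let M = (E, ρ) be a matroid and let X ⊆ Y ⊆ E be two sets such that X is a cyclic set of M and Y is a flat of M. Then the cyclic flats of the minor M|Y/X are exactly the sets Z ⊆ Y − X such that Z ∪ X is a cyclic flat of M, and for each such Z the rank of Z in M|Y/X equals ρ(Z ∪ X) − ρ(X). -/

import Mathlib

open Finset

structure FinMatroid (α : Type*) [DecidableEq α] where
  E : Finset α
  rk : Finset α → ℕ
  rk_le_card : ∀ A, A ⊆ E → rk A ≤ A.card
  rk_mono : ∀ A B, A ⊆ B → B ⊆ E → rk A ≤ rk B
  rk_submod : ∀ A B, A ⊆ E → B ⊆ E → rk (A ∪ B) + rk (A ∩ B) ≤ rk A + rk B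

namespace FinMatroid

variable {α : Type*} [DecidableEq α]

/-- The closure operator `cl(A) = {e ∈ E : ρ(A ∪ {e}) = ρ(A)}`. -/
def cl (M : FinMatroid α) (A : Finset α) : Finset α :=
  M.E.filter fun e => M.rk (insert e A) = M.rk A

/-- The cyclic operator `cyc(A) = {e ∈ A : ρ(A − {e}) = ρ(A)}`. -/
def cyc (M : FinMatroid α) (A : Finset α) : Finset α :=
  A.filter fun e => M.rk (A.erase e) = M.rk A

/-- A flat is a set fixed by the closure operator. -/
def IsFlat (M : FinMatroid α) (F : Finset α) : Prop :=
  F ⊆ M.E ∧ M.cl F = F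

/-- A cyclic set is a set fixed by the cyclic operator. -/
def IsCyclic (M : FinMatroid α) (U : Finset α) : Prop :=
  U ⊆ M.E ∧ M.cyc U = U

/-- A cyclic flat is a set fixed by both the closure and the cyclic operators. -/
def IsCyclicFlat (M : FinMatroid α) (Z : Finset α) : Prop :=
  Z ⊆ M.E ∧ M.cl Z = Z ∧ M.cyc Z = Z

/-- The minor `M|Y/X`: restriction to `Y` followed by contraction of `X`. -/
def minor (M : FinMatroid α) (X Y : Finset α) (hXY : X ⊆ Y) (hY : Y ⊆ M.E) :
    FinMatroid α where
  E := Y \ X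
  rk A := M.rk (A ∪ X) - M.rk X
  rk_le_card := by
    intro A hA
    have hAE : A ⊆ M.E := fun a ha => hY (mem_sdiff.mp (hA ha)).1
    have hXE : X ⊆ M.E := hXY.trans hY
    have h1 := M.rk_submod A X hAE hXE
    have h2 := M.rk_le_card A hAE
    show M.rk (A ∪ X) - M.rk X ≤ A.card
    omega
  rk_mono := by
    intro A B hAB hB
    have hBE : B ⊆ M.E := fun a ha => hY (mem_sdiff.mp (hB ha)).1
    have hBX : B ∪ X ⊆ M.E := union_subset hBE (hXY.trans hY)
    have := M.rk_mono (A ∪ X) (B ∪ X) (union_subset_union hAB Subset.rfl) hBX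
    show M.rk (A ∪ X) - M.rk X ≤ M.rk (B ∪ X) - M.rk X
    omega
  rk_submod := by
    intro A B hA hB
    have hAE : A ⊆ M.E := fun a ha => hY (mem_sdiff.mp (hA ha)).1
    have hBE : B ⊆ M.E := fun a ha => hY (mem_sdiff.mp (hB ha)).1
    have hXE : X ⊆ M.E := hXY.trans hY
    have hAX : A ∪ X ⊆ M.E := union_subset hAE hXE
    have hBX : B ∪ X ⊆ M.E := union_subset hBE hXE
    have hsub := M.rk_submod (A ∪ X) (B ∪ X) hAX hBX
    have e1 : (A ∪ X) ∪ (B ∪ X) = (A ∪ B) ∪ X := by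
      ext x; simp only [mem_union]; tauto
    have e2 : (A ∪ X) ∩ (B ∪ X) = (A ∩ B) ∪ X := by
      ext x; simp only [mem_union, mem_inter]; tauto
    rw [e1, e2] at hsub
    have h1 : M.rk X ≤ M.rk (A ∪ X) := M.rk_mono X _ subset_union_right hAX
    have h2 : M.rk X ≤ M.rk (B ∪ X) := M.rk_mono X _ subset_union_right hBX
    have hIX : (A ∩ B) ∪ X ⊆ M.E := union_subset (inter_subset_left.trans hAE) hXE
    have hUX : (A ∪ B) ∪ X ⊆ M.E := union_subset (union_subset hAE hBE) hXE
    have h3 : M.rk X ≤ M.rk ((A ∩ B) ∪ X) := M.rk_mono X _ subset_union_right hIX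
    have h4 : M.rk X ≤ M.rk ((A ∪ B) ∪ X) := M.rk_mono X _ subset_union_right hUX
    show M.rk ((A ∪ B) ∪ X) - M.rk X + (M.rk ((A ∩ B) ∪ X) - M.rk X) ≤
      (M.rk (A ∪ X) - M.rk X) + (M.rk (B ∪ X) - M.rk X)
    omega

/-- The restriction `M|Y`. -/
def restrict (M : FinMatroid α) (Y : Finset α) (hY : Y ⊆ M.E) : FinMatroid α where
  E := Y
  rk := M.rk
  rk_le_card := fun A hA => M.rk_le_card A (hA.trans hY)
  rk_mono := fun A B hAB hB => M.rk_mono A B hAB (hB.trans hY)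
  rk_submod := fun A B hA hB => M.rk_submod A B (hA.trans hY) (hB.trans hY)

/-- `M` is binary: it is the matroid of linear dependence of a family of
vectors over the field with two elements. -/
def IsBinary (M : FinMatroid α) : Prop :=
  ∃ (m : ℕ) (φ : α → (Fin m → ZMod 2)),
    ∀ A : Finset α, A ⊆ M.E →
      M.rk A = Module.finrank (ZMod 2) (Submodule.span (ZMod 2) (φ '' (A : Set α)))

def Simple (M : FinMatroid α) : Prop :=
  (∀ e ∈ M.E, M.rk {e} = 1) ∧
    ∀ e ∈ M.E, ∀ f ∈ M.E, e ≠ f → M.rk ({e, f} : Finset α) = 2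

def NoIsthmus (M : FinMatroid α) : Prop :=
  ∀ e ∈ M.E, M.rk (M.E.erase e) = M.rk M.E

def IsMinDist (M : FinMatroid α) (d : ℕ) : Prop :=
  (∃ X ⊆ M.E, M.rk (M.E \ X) < M.rk M.E ∧ X.card = d) ∧
    ∀ X ⊆ M.E, M.rk (M.E \ X) < M.rk M.E → d ≤ X.card

def IsAtomCF (M : FinMatroid α) (Z : Finset α) : Prop :=
  M.IsCyclicFlat Z ∧ Z ≠ ∅ ∧ ¬ ∃ Z', M.IsCyclicFlat Z' ∧ ∅ ⊂ Z' ∧ Z' ⊂ Z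

def IsCoatomCF (M : FinMatroid α) (Z : Finset α) : Prop :=
  M.IsCyclicFlat Z ∧ Z ⊂ M.E ∧ ¬ ∃ Z', M.IsCyclicFlat Z' ∧ Z ⊂ Z' ∧ Z' ⊂ M.E

def IsCircuit (M : FinMatroid α) (C : Finset α) : Prop :=
  C ⊆ M.E ∧ M.rk C < C.card ∧ ∀ D ⊂ C, M.rk D = D.card

end FinMatroid



section Aux

namespace FinMatroid

variable {α : Type*} [DecidableEq α]

lemma cl_insert_mono' (M : FinMatroid α) {A B : Finset α} {e : α}
    (hAB : A ⊆ B) (hB : B ⊆ M.E) (he : e ∈ M.E)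
    (h : M.rk (insert e A) = M.rk A) : M.rk (insert e B) = M.rk B := by
  by_cases heB : e ∈ B
  · rw [insert_eq_self.mpr heB]
  · have hA : A ⊆ M.E := hAB.trans hB
    have h1 := M.rk_submod (insert e A) B (insert_subset he hA) hB
    have hu : insert e A ∪ B = insert e B := by
      rw [insert_union, union_eq_right.mpr hAB]
    have hi : insert e A ∩ B = A := by
      ext a
      simp only [mem_inter, mem_insert]
      constructor
      · rintro ⟨(rfl | ha), hb⟩
        · exact absurd hb heB
        · exact ha
      · exact fun ha => ⟨Or.inr ha, hAB ha⟩
    rw [hu, hi, h] at h1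
    have h2 := M.rk_mono B (insert e B) (subset_insert _ _) (insert_subset he hB)
    omega

lemma rk_erase_of_mem_cyclic' (M : FinMatroid α) {X A : Finset α} {e : α}
    (hXA : X ⊆ A) (hA : A ⊆ M.E) (he : e ∈ X)
    (h : M.rk (X.erase e) = M.rk X) : M.rk (A.erase e) = M.rk A := by
  have h1 := M.rk_submod (A.erase e) X ((erase_subset _ _).trans hA) (hXA.trans hA)
  have hu : A.erase e ∪ X = A := by
    ext a
    simp only [mem_union, mem_erase]
    constructor
    · rintro (⟨_, ha⟩ | hx)
      exacts [ha, hXA hx]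
    · intro ha
      by_cases hae : a = e
      · exact Or.inr (hae ▸ he)
      · exact Or.inl ⟨hae, ha⟩
  have hi : A.erase e ∩ X = X.erase e := by
    ext a
    simp only [mem_inter, mem_erase]
    constructor
    · rintro ⟨⟨hne, _⟩, hx⟩
      exact ⟨hne, hx⟩
    · rintro ⟨hne, hx⟩
      exact ⟨⟨hne, hXA hx⟩, hx⟩
  rw [hu, hi, h] at h1
  have h2 := M.rk_mono (A.erase e) A (erase_subset _ _) hA
  omega

lemma erase_union_of_not_mem {X Z : Finset α} {e : α} (he : e ∉ X) :
    Z.erase e ∪ X = (Z ∪ X).erase e := by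
  ext a
  simp only [mem_union, mem_erase]
  constructor
  · rintro (⟨hne, hz⟩ | hx)
    · exact ⟨hne, Or.inl hz⟩
    · exact ⟨fun h => he (h ▸ hx), Or.inr hx⟩
  · rintro ⟨hne, hz | hx⟩
    · exact Or.inl ⟨hne, hz⟩
    · exact Or.inr hx

end FinMatroid

end Aux

/-- For `X ⊆ Y ⊆ E` with `X` a cyclic set and `Y` a flat of `M`, the
cyclic flats of the minor `M|Y/X` are exactly the sets `Z ⊆ Y − X` with `Z ∪ X` a
cyclic flat of `M`, and the rank of such a `Z` in `M|Y/X` equals `ρ(Z ∪ X) − ρ(X)`. -/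
theorem cyclicFlats_of_minor {α : Type*} [DecidableEq α] (M : FinMatroid α)
    (X Y : Finset α) (hXY : X ⊆ Y) (hX : M.IsCyclic X) (hY : M.IsFlat Y) (Z : Finset α) :
    ((M.minor X Y hXY hY.1).IsCyclicFlat Z ↔ Z ⊆ Y \ X ∧ M.IsCyclicFlat (Z ∪ X)) ∧
      ((M.minor X Y hXY hY.1).IsCyclicFlat Z →
        (M.minor X Y hXY hY.1).rk Z = M.rk (Z ∪ X) - M.rk X) := by
  have hYE : Y ⊆ M.E := hY.1
  have hXE : X ⊆ M.E := hXY.trans hYE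
  refine ⟨?_, fun _ => rfl⟩
  constructor
  · rintro ⟨hZE, hcl, hcyc⟩
    have hZE' : Z ⊆ Y \ X := hZE
    have hZME : Z ⊆ M.E := fun a ha => hYE (mem_sdiff.mp (hZE' ha)).1
    have hZXE : Z ∪ X ⊆ M.E := union_subset hZME hXE
    have hZXY : Z ∪ X ⊆ Y := union_subset (fun a ha => (mem_sdiff.mp (hZE' ha)).1) hXY
    have hrXZX : M.rk X ≤ M.rk (Z ∪ X) := M.rk_mono X _ subset_union_right hZXE
    refine ⟨hZE', hZXE, ?_, ?_⟩
    · -- closure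
      ext e
      simp only [FinMatroid.cl, mem_filter]
      constructor
      · rintro ⟨heE, hre⟩
        by_contra heZX
        by_cases heY : e ∈ Y
        · have heYX : e ∈ Y \ X := mem_sdiff.mpr ⟨heY, fun h => heZX (mem_union_right _ h)⟩
          have heZ : e ∉ Z := fun h => heZX (mem_union_left _ h)
          have : e ∈ (M.minor X Y hXY hY.1).cl Z := by
            simp only [FinMatroid.cl, mem_filter]; simp only [FinMatroid.minor]
            refine ⟨heYX, ?_⟩
            rw [insert_union, hre]
          rw [hcl] at this
          exact heZ this
        · have : M.rk (insert e Y) = M.rk Y :=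
            M.cl_insert_mono' hZXY hYE heE hre
          have heclY : e ∈ M.cl Y := by
            simp only [FinMatroid.cl, mem_filter]
            exact ⟨heE, this⟩
          rw [hY.2] at heclY
          exact heY heclY
      · intro heZX
        exact ⟨hZXE heZX, by rw [insert_eq_self.mpr heZX]⟩
    · -- cyclic
      ext e
      simp only [FinMatroid.cyc, mem_filter]
      refine ⟨fun h => h.1, fun heZX => ⟨heZX, ?_⟩⟩
      rcases mem_union.mp heZX with heZ | heX
      · have heX : e ∉ X := (mem_sdiff.mp (hZE' heZ)).2
        have he' : e ∈ (M.minor X Y hXY hY.1).cyc Z := by rw [hcyc]; exact heZ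
        simp only [FinMatroid.cyc, mem_filter] at he'; simp only [FinMatroid.minor] at he'
        have hrk := he'.2
        rw [FinMatroid.erase_union_of_not_mem heX] at hrk
        have h1 : M.rk X ≤ M.rk ((Z ∪ X).erase e) :=
          M.rk_mono X _ (fun a ha => mem_erase.mpr ⟨fun h => heX (h ▸ ha), mem_union_right _ ha⟩)
            (((Z ∪ X).erase_subset e).trans hZXE)
        have h2 : M.rk ((Z ∪ X).erase e) ≤ M.rk (Z ∪ X) :=
          M.rk_mono _ _ (erase_subset _ _) hZXE
        omega
      · have he' : e ∈ M.cyc X := by rw [hX.2]; exact heX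
        simp only [FinMatroid.cyc, mem_filter] at he'
        exact M.rk_erase_of_mem_cyclic' subset_union_right hZXE heX he'.2
  · rintro ⟨hZsub, hZXE, hcl, hcyc⟩
    have hZME : Z ⊆ M.E := fun a ha => hYE (mem_sdiff.mp (hZsub ha)).1
    have hrXZX : M.rk X ≤ M.rk (Z ∪ X) := M.rk_mono X _ subset_union_right hZXE
    refine ⟨hZsub, ?_, ?_⟩
    · -- closure in minor
      ext e
      simp only [FinMatroid.cl, mem_filter]; simp only [FinMatroid.minor]
      constructor
      · rintro ⟨heYX, hre⟩
        rcases mem_sdiff.mp heYX with ⟨heY, heX⟩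
        by_contra heZ
        have heZX : e ∉ Z ∪ X := fun h => (mem_union.mp h).elim heZ heX
        have h1 : M.rk (Z ∪ X) ≤ M.rk (insert e (Z ∪ X)) :=
          M.rk_mono _ _ (subset_insert _ _) (insert_subset (hYE heY) hZXE)
        rw [insert_union] at hre
        have heq : M.rk (insert e (Z ∪ X)) = M.rk (Z ∪ X) := by omega
        have : e ∈ M.cl (Z ∪ X) := by
          simp only [FinMatroid.cl, mem_filter]
          exact ⟨hYE heY, heq⟩
        rw [hcl] at this
        exact heZX this
      · intro heZ
        refine ⟨hZsub heZ, ?_⟩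
        rw [insert_union, insert_eq_self.mpr (mem_union_left _ heZ)]
    · -- cyclic in minor
      ext e
      simp only [FinMatroid.cyc, mem_filter]; simp only [FinMatroid.minor]
      refine ⟨fun h => h.1, fun heZ => ⟨heZ, ?_⟩⟩
      have heX : e ∉ X := (mem_sdiff.mp (hZsub heZ)).2
      have he' : e ∈ M.cyc (Z ∪ X) := by rw [hcyc]; exact mem_union_left _ heZ
      simp only [FinMatroid.cyc, mem_filter] at he'
      rw [FinMatroid.erase_union_of_not_mem heX, he'.2]
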